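/- Let V be a real vector space, F : V → V a linear map, and v ∈ V. If the bracket [ψ,φ]_{F,v} = φ(v)·F*(ψ) − ψ(v)·F*(φ) satisfies the Jacobi identity for all ψ, φ, ζ ∈ V*, then one of the following holds: (1) v is an eigenvector of F, i.e. there exists λ ∈ ℝ with F(v) = λ·v; or (2) there exist ρ, η ∈ V* such that F*(ψ) = ψ(v)·ρ + ψ(F(v))·η for all ψ ∈ V*. -/

import Mathlib

/-- The bracket on the dual space `V*` associated with a linear map `F : V → V` and a
vector `v ∈ V`: `[ψ,φ]_{F,v} = φ(v)·F*(ψ) − ψ(v)·F*(φ)`. -/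
noncomputable def dualBracket {V : Type*} [AddCommGroup V] [Module ℝ V]
    (F : V →ₗ[ℝ] V) (v : V) (ψ φ : Module.Dual ℝ V) : Module.Dual ℝ V :=
  φ v • F.dualMap ψ - ψ v • F.dualMap φ

/-- The Jacobi identity for `dualBracket` reduces to a cyclic identity on `F*`. -/
theorem dualBracket_jacobi_key {V : Type*} [AddCommGroup V] [Module ℝ V]
    (F : V →ₗ[ℝ] V) (v : V)
    (hJ : ∀ ψ φ ζ : Module.Dual ℝ V,
        dualBracket F v (dualBracket F v ψ φ) ζ +
          dualBracket F v (dualBracket F v ζ ψ) φ +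
          dualBracket F v (dualBracket F v φ ζ) ψ = 0)
    (ψ φ ζ : Module.Dual ℝ V) :
    (ψ v * φ (F v) - φ v * ψ (F v)) • F.dualMap ζ +
      (ζ v * ψ (F v) - ψ v * ζ (F v)) • F.dualMap φ +
      (φ v * ζ (F v) - ζ v * φ (F v)) • F.dualMap ψ = 0 := by
  have h := hJ ψ φ ζ
  simp only [dualBracket, map_sub, map_smul, LinearMap.sub_apply, LinearMap.smul_apply,
    smul_eq_mul, LinearMap.dualMap_apply] at h ⊢
  linear_combination (norm := module) h

/-- If the bracket `[·,·]_{F,v}` satisfies the Jacobi identity, then either `v` is an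
eigenvector of `F`, or `F* = ι_v ⊗ ρ + ι_{Fv} ⊗ η` for some `ρ, η ∈ V*`. -/
theorem dualBracket_jacobi_dichotomy {V : Type*} [AddCommGroup V] [Module ℝ V]
    (F : V →ₗ[ℝ] V) (v : V)
    (hJ : ∀ ψ φ ζ : Module.Dual ℝ V,
        dualBracket F v (dualBracket F v ψ φ) ζ +
          dualBracket F v (dualBracket F v ζ ψ) φ +
          dualBracket F v (dualBracket F v φ ζ) ψ = 0) :
    (∃ lam : ℝ, F v = lam • v) ∨
    (∃ ρ η : Module.Dual ℝ V, ∀ ψ : Module.Dual ℝ V,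
        F.dualMap ψ = ψ v • ρ + ψ (F v) • η) := by
  by_cases hev : ∃ lam : ℝ, F v = lam • v
  · exact Or.inl hev
  right
  -- `v` and `F v` are linearly independent
  have hind : LinearIndependent ℝ ![F v, v] := by
    rw [linearIndependent_fin2]
    refine ⟨?_, fun a ha => hev ⟨a, ha.symm⟩⟩
    · intro h0
      exact hev ⟨0, by simp [show v = 0 by simpa using h0]⟩
  have hne : F v ≠ v := fun h => hev ⟨1, by simpa using h⟩
  have hs := hind.linearIndepOn_id
  let b := Module.Basis.extend hs
  have hvmem : v ∈ hs.extend (Set.subset_univ _) :=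
    hs.subset_extend _ ⟨1, rfl⟩
  have hFvmem : F v ∈ hs.extend (Set.subset_univ _) :=
    hs.subset_extend _ ⟨0, rfl⟩
  set iv : hs.extend (Set.subset_univ (Set.range ![F v, v])) := ⟨v, hvmem⟩
  set iFv : hs.extend (Set.subset_univ (Set.range ![F v, v])) := ⟨F v, hFvmem⟩
  have hij : iv ≠ iFv := by
    intro h
    apply hne
    have h2 := congrArg Subtype.val h
    simp only [iv, iFv] at h2
    exact h2.symm
  set ψ : Module.Dual ℝ V := b.coord iv
  set φ : Module.Dual ℝ V := b.coord iFv
  have hψv : ψ v = 1 := by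
    have : ψ (b iv) = 1 := by simp [ψ, Module.Basis.coord_apply]
    simpa [Module.Basis.extend_apply_self, iv, b] using this
  have hψFv : ψ (F v) = 0 := by
    have : ψ (b iFv) = 0 := by
      simp [ψ, Module.Basis.coord_apply, Finsupp.single_apply, hij.symm]
    simpa [Module.Basis.extend_apply_self, iFv, b] using this
  have hφv : φ v = 0 := by
    have : φ (b iv) = 0 := by
      simp [φ, Module.Basis.coord_apply, Finsupp.single_apply, hij]
    simpa [Module.Basis.extend_apply_self, iv, b] using this
  have hφFv : φ (F v) = 1 := by
    have : φ (b iFv) = 1 := by simp [φ, Module.Basis.coord_apply]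
    simpa [Module.Basis.extend_apply_self, iFv, b] using this
  refine ⟨F.dualMap ψ, F.dualMap φ, fun ζ => ?_⟩
  have h := dualBracket_jacobi_key F v hJ ψ φ ζ
  rw [hψv, hψFv, hφv, hφFv] at h
  have h' : F.dualMap ζ - ζ v • F.dualMap ψ - ζ (F v) • F.dualMap φ = 0 := by
    linear_combination (norm := module) h
  linear_combination (norm := module) h'
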